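/- Let n ≥ 2 and ψ ∈ (0, π/2]. Let v : I → ℝ^{n−1} and ρ : I → (0, ∞) be three times continuously differentiable curves on an open interval I satisfying, for all t ∈ I, the geodesic equations v̈ + (2|v̇|² v − 4⟨v, v̇⟩ v̇)/(|v|² + 1) + (2ρ̇/ρ) v̇ = 0 and ρ̈ = 4 ρ sin²ψ |v̇|²/(|v|² + 1)². Define α : I → ℝ^{n+1} by α(t) = (2 v(t) sin ψ/(|v(t)|² + 1), sin ψ (|v(t)|² − 1)/(|v(t)|² + 1), cos ψ). Then for all t ∈ I: (4|v̇|²(1 + 2 sin²ψ)/(|v|² + 1)² + 6ρ̇²/ρ²) · α̇(t) + (6ρ̇/ρ) · α̈(t) + α⃛(t) = 0; in particular {α̇(t), α̈(t), α⃛(t)} is everywhere linearly dependent. -/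

import Mathlib

open scoped InnerProductSpace

set_option maxHeartbeats 1600000

/-- Embedding of `ℝᵐ` into the first `m` coordinates of `ℝⁿ`. -/
noncomputable def embCoord (m n : ℕ) (v : EuclideanSpace ℝ (Fin m)) :
    EuclideanSpace ℝ (Fin n) :=
  (WithLp.equiv 2 (Fin n → ℝ)).symm (fun i => if h : (i : ℕ) < m then v ⟨i, h⟩ else 0)

/-- `embCoord` as a continuous linear map. -/
noncomputable def embCoordL (m n : ℕ) :
    EuclideanSpace ℝ (Fin m) →L[ℝ] EuclideanSpace ℝ (Fin n) :=
  LinearMap.toContinuousLinearMap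
    { toFun := embCoord m n
      map_add' := by
        intro x y
        ext i
        simp only [embCoord, WithLp.equiv_symm_apply, PiLp.toLp_apply, PiLp.add_apply]
        split <;> simp
      map_smul' := by
        intro r x
        ext i
        simp only [embCoord, WithLp.equiv_symm_apply, PiLp.toLp_apply, PiLp.smul_apply, RingHom.id_apply,
          smul_eq_mul]
        split <;> simp }

lemma embCoordL_apply (m n : ℕ) (x : EuclideanSpace ℝ (Fin m)) :
    embCoordL m n x = embCoord m n x := rfl

/-- Let `(v, ρ)` be a `C³` solution of the geodesic equations on the
cone of aperture `ψ` in `ℝ^{n+1}` directed along `(0, …, 0, 1)`, and let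
`α = (2 v sin ψ/(|v|²+1), sin ψ (|v|²−1)/(|v|²+1), cos ψ)` be the radial projection of the
corresponding curve onto the unit sphere. Then
`(4|v̇|²(1 + 2 sin²ψ)/(|v|² + 1)² + 6ρ̇²/ρ²) α̇ + (6ρ̇/ρ) α̈ + α⃛ = 0` on `I`; in
particular `{α̇, α̈, α⃛}` is everywhere linearly dependent. -/
theorem alpha_third_order_relation
    (n : ℕ) (hn : 2 ≤ n) (ψ : ℝ) (hψ : ψ ∈ Set.Ioc (0 : ℝ) (Real.pi / 2))
    (I : Set ℝ) (hIopen : IsOpen I) (hIconn : I.OrdConnected)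
    (v v' v'' v''' : ℝ → EuclideanSpace ℝ (Fin (n - 1)))
    (ρ ρ' ρ'' ρ''' : ℝ → ℝ) (hρpos : ∀ t ∈ I, 0 < ρ t)
    (hv1 : ∀ t ∈ I, HasDerivAt v (v' t) t)
    (hv2 : ∀ t ∈ I, HasDerivAt v' (v'' t) t)
    (hv3 : ∀ t ∈ I, HasDerivAt v'' (v''' t) t)
    (hvC3 : ContinuousOn v''' I)
    (hρ1 : ∀ t ∈ I, HasDerivAt ρ (ρ' t) t)
    (hρ2 : ∀ t ∈ I, HasDerivAt ρ' (ρ'' t) t)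
    (hρ3 : ∀ t ∈ I, HasDerivAt ρ'' (ρ''' t) t)
    (hρC3 : ContinuousOn ρ''' I)
    (hgeo1 : ∀ t ∈ I,
      v'' t + (2 * ‖v' t‖ ^ 2 / (‖v t‖ ^ 2 + 1)) • v t
          - (4 * ⟪v t, v' t⟫_ℝ / (‖v t‖ ^ 2 + 1)) • v' t
          + (2 * ρ' t / ρ t) • v' t = 0)
    (hgeo2 : ∀ t ∈ I,
      ρ'' t = 4 * ρ t * Real.sin ψ ^ 2 * ‖v' t‖ ^ 2 / (‖v t‖ ^ 2 + 1) ^ 2)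
    (α α' α'' α''' : ℝ → EuclideanSpace ℝ (Fin (n + 1)))
    (hα : ∀ t, α t =
      (2 * Real.sin ψ / (‖v t‖ ^ 2 + 1)) • embCoord (n - 1) (n + 1) (v t)
      + (Real.sin ψ * (‖v t‖ ^ 2 - 1) / (‖v t‖ ^ 2 + 1)) •
          EuclideanSpace.single (⟨n - 1, by omega⟩ : Fin (n + 1)) 1
      + Real.cos ψ • EuclideanSpace.single (⟨n, by omega⟩ : Fin (n + 1)) 1)
    (hα1 : ∀ t ∈ I, HasDerivAt α (α' t) t)
    (hα2 : ∀ t ∈ I, HasDerivAt α' (α'' t) t)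
    (hα3 : ∀ t ∈ I, HasDerivAt α'' (α''' t) t) :
    ∀ t ∈ I,
      (4 * ‖v' t‖ ^ 2 * (1 + 2 * Real.sin ψ ^ 2) / (‖v t‖ ^ 2 + 1) ^ 2
          + 6 * (ρ' t) ^ 2 / (ρ t) ^ 2) • α' t
        + (6 * ρ' t / ρ t) • α'' t + α''' t = 0 ∧
      ¬ LinearIndependent ℝ ![α' t, α'' t, α''' t] := by
  have hQne : ∀ u : ℝ, (⟪v u, v u⟫_ℝ + 1) ≠ 0 := fun u =>
    (add_pos_of_nonneg_of_pos real_inner_self_nonneg one_pos).ne'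
  have hni : ∀ u : ℝ, ‖v u‖ ^ 2 = ⟪v u, v u⟫_ℝ :=
    fun u => (real_inner_self_eq_norm_sq (v u)).symm
  have hni' : ∀ u : ℝ, ‖v' u‖ ^ 2 = ⟪v' u, v' u⟫_ℝ :=
    fun u => (real_inner_self_eq_norm_sq (v' u)).symm
  have hdW : ∀ t ∈ I, HasDerivAt (fun u => embCoord (n - 1) (n + 1) (v u)) (embCoord (n - 1) (n + 1) (v' t)) t :=
    fun t ht => (embCoordL (n - 1) (n + 1)).hasFDerivAt.comp_hasDerivAt t (hv1 t ht)
  have hdW1 : ∀ t ∈ I, HasDerivAt (fun u => embCoord (n - 1) (n + 1) (v' u)) (embCoord (n - 1) (n + 1) (v'' t)) t :=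
    fun t ht => (embCoordL (n - 1) (n + 1)).hasFDerivAt.comp_hasDerivAt t (hv2 t ht)
  have hdQ : ∀ t ∈ I, HasDerivAt (fun u => ⟪v u, v u⟫_ℝ + 1) ((⟪v t, v' t⟫_ℝ + ⟪v' t, v t⟫_ℝ)) t :=
    fun t ht => ((hv1 t ht).inner ℝ (hv1 t ht)).add_const 1
  have hdQ1 : ∀ t ∈ I, HasDerivAt (fun u => (⟪v u, v' u⟫_ℝ + ⟪v' u, v u⟫_ℝ)) ((⟪v t, v'' t⟫_ℝ + ⟪v' t, v' t⟫_ℝ + (⟪v' t, v' t⟫_ℝ + ⟪v'' t, v t⟫_ℝ))) t :=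
    fun t ht => ((hv1 t ht).inner ℝ (hv2 t ht)).add ((hv2 t ht).inner ℝ (hv1 t ht))
  have hdP : ∀ t ∈ I, HasDerivAt (fun u => ⟪v u, v' u⟫_ℝ) (⟪v t, v'' t⟫_ℝ + ⟪v' t, v' t⟫_ℝ) t :=
    fun t ht => (hv1 t ht).inner ℝ (hv2 t ht)
  have hdN : ∀ t ∈ I, HasDerivAt (fun u => ⟪v' u, v' u⟫_ℝ) (⟪v' t, v'' t⟫_ℝ + ⟪v'' t, v' t⟫_ℝ) t :=
    fun t ht => (hv2 t ht).inner ℝ (hv2 t ht)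
  have hdg : ∀ t ∈ I, HasDerivAt (fun u => (2 * Real.sin ψ / (⟪v u, v u⟫_ℝ + 1))) ((-(2 * Real.sin ψ) * (⟪v t, v' t⟫_ℝ + ⟪v' t, v t⟫_ℝ) / (⟪v t, v t⟫_ℝ + 1) ^ 2)) t := by
    intro t ht
    have h := (hasDerivAt_const t (2 * Real.sin ψ)).fun_div (hdQ t ht) (hQne t)
    refine h.congr_deriv ?_
    ring
  have hdg1 : ∀ t ∈ I, HasDerivAt (fun u => (-(2 * Real.sin ψ) * (⟪v u, v' u⟫_ℝ + ⟪v' u, v u⟫_ℝ) / (⟪v u, v u⟫_ℝ + 1) ^ 2)) ((-(2 * Real.sin ψ) * (⟪v t, v'' t⟫_ℝ + ⟪v' t, v' t⟫_ℝ + (⟪v' t, v' t⟫_ℝ + ⟪v'' t, v t⟫_ℝ)) / (⟪v t, v t⟫_ℝ + 1) ^ 2 + 4 * Real.sin ψ * (⟪v t, v' t⟫_ℝ + ⟪v' t, v t⟫_ℝ) ^ 2 / (⟪v t, v t⟫_ℝ + 1) ^ 3)) t := by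
    intro t ht
    have h := ((hasDerivAt_const t (-(2 * Real.sin ψ))).fun_mul (hdQ1 t ht)).fun_div
      ((hdQ t ht).fun_pow 2) (pow_ne_zero 2 (hQne t))
    refine h.congr_deriv ?_
    have hq := hQne t
    set a00 := ⟪v t, v t⟫_ℝ
    set a01 := ⟪v t, v' t⟫_ℝ
    set a10 := ⟪v' t, v t⟫_ℝ
    set a11 := ⟪v' t, v' t⟫_ℝ
    set a02 := ⟪v t, v'' t⟫_ℝ
    set a20 := ⟪v'' t, v t⟫_ℝ
    field_simp [hq]
    ring
  have hαF : ∀ u : ℝ, α u = (2 * Real.sin ψ / (⟪v u, v u⟫_ℝ + 1)) • (embCoord (n - 1) (n + 1) (v u) - (EuclideanSpace.single (⟨n - 1, by omega⟩ : Fin (n + 1)) (1:ℝ)))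
      + (Real.sin ψ • (EuclideanSpace.single (⟨n - 1, by omega⟩ : Fin (n + 1)) (1:ℝ)) + Real.cos ψ • (EuclideanSpace.single (⟨n, by omega⟩ : Fin (n + 1)) (1:ℝ))) := by
    intro u
    rw [hα u, hni u]
    have hq := hQne u
    set a00 := ⟪v u, v u⟫_ℝ
    match_scalars
    · field_simp [hq]
    · field_simp [hq]
      ring
    · ring
  have heq1 : ∀ t ∈ I, α' t = (2 * Real.sin ψ / (⟪v t, v t⟫_ℝ + 1)) • embCoord (n - 1) (n + 1) (v' t) + (-(2 * Real.sin ψ) * (⟪v t, v' t⟫_ℝ + ⟪v' t, v t⟫_ℝ) / (⟪v t, v t⟫_ℝ + 1) ^ 2) • (embCoord (n - 1) (n + 1) (v t) - (EuclideanSpace.single (⟨n - 1, by omega⟩ : Fin (n + 1)) (1:ℝ))) := by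
    intro t ht
    have hF : HasDerivAt (fun u => (2 * Real.sin ψ / (⟪v u, v u⟫_ℝ + 1)) • (embCoord (n - 1) (n + 1) (v u) - (EuclideanSpace.single (⟨n - 1, by omega⟩ : Fin (n + 1)) (1:ℝ)))
        + (Real.sin ψ • (EuclideanSpace.single (⟨n - 1, by omega⟩ : Fin (n + 1)) (1:ℝ)) + Real.cos ψ • (EuclideanSpace.single (⟨n, by omega⟩ : Fin (n + 1)) (1:ℝ)))) ((2 * Real.sin ψ / (⟪v t, v t⟫_ℝ + 1)) • embCoord (n - 1) (n + 1) (v' t) + (-(2 * Real.sin ψ) * (⟪v t, v' t⟫_ℝ + ⟪v' t, v t⟫_ℝ) / (⟪v t, v t⟫_ℝ + 1) ^ 2) • (embCoord (n - 1) (n + 1) (v t) - (EuclideanSpace.single (⟨n - 1, by omega⟩ : Fin (n + 1)) (1:ℝ)))) t :=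
      ((hdg t ht).smul ((hdW t ht).sub_const _)).add_const _
    exact (hα1 t ht).unique (hF.congr_of_eventuallyEq (Filter.Eventually.of_forall hαF))
  have heq2 : ∀ t ∈ I, α'' t = ((2 * Real.sin ψ / (⟪v t, v t⟫_ℝ + 1)) • embCoord (n - 1) (n + 1) (v'' t) + (-(2 * Real.sin ψ) * (⟪v t, v' t⟫_ℝ + ⟪v' t, v t⟫_ℝ) / (⟪v t, v t⟫_ℝ + 1) ^ 2) • embCoord (n - 1) (n + 1) (v' t)) + ((-(2 * Real.sin ψ) * (⟪v t, v' t⟫_ℝ + ⟪v' t, v t⟫_ℝ) / (⟪v t, v t⟫_ℝ + 1) ^ 2) • embCoord (n - 1) (n + 1) (v' t) + (-(2 * Real.sin ψ) * (⟪v t, v'' t⟫_ℝ + ⟪v' t, v' t⟫_ℝ + (⟪v' t, v' t⟫_ℝ + ⟪v'' t, v t⟫_ℝ)) / (⟪v t, v t⟫_ℝ + 1) ^ 2 + 4 * Real.sin ψ * (⟪v t, v' t⟫_ℝ + ⟪v' t, v t⟫_ℝ) ^ 2 / (⟪v t, v t⟫_ℝ + 1) ^ 3) • (embCoord (n - 1)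 (n + 1) (v t) - (EuclideanSpace.single (⟨n - 1, by omega⟩ : Fin (n + 1)) (1:ℝ)))) := by
    intro t ht
    have hF : HasDerivAt (fun u => (2 * Real.sin ψ / (⟪v u, v u⟫_ℝ + 1)) • embCoord (n - 1) (n + 1) (v' u) + (-(2 * Real.sin ψ) * (⟪v u, v' u⟫_ℝ + ⟪v' u, v u⟫_ℝ) / (⟪v u, v u⟫_ℝ + 1) ^ 2) • (embCoord (n - 1) (n + 1) (v u) - (EuclideanSpace.single (⟨n - 1, by omega⟩ : Fin (n + 1)) (1:ℝ)))) (((2 * Real.sin ψ / (⟪v t, v t⟫_ℝ + 1)) • embCoord (n - 1) (n + 1) (v'' t) + (-(2 * Real.sin ψ) * (⟪v t, v' t⟫_ℝ + ⟪v' t, v t⟫_ℝ) / (⟪v t, v t⟫_ℝ + 1) ^ 2) • embCoord (n - 1) (n + 1) (v' t)) + ((-(2 * Real.sin ψ) * (⟪v t, v' t⟫_ℝ + ⟪v' t, v t⟫_ℝ) / (⟪v t, v t⟫_ℝ + 1) ^ 2) • embCoord (n - 1) (n + 1) (v' t) + (-(2 * Real.sin ψ) * (⟪v t, v'' t⟫_ℝ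 + ⟪v' t, v' t⟫_ℝ + (⟪v' t, v' t⟫_ℝ + ⟪v'' t, v t⟫_ℝ)) / (⟪v t, v t⟫_ℝ + 1) ^ 2 + 4 * Real.sin ψ * (⟪v t, v' t⟫_ℝ + ⟪v' t, v t⟫_ℝ) ^ 2 / (⟪v t, v t⟫_ℝ + 1) ^ 3) • (embCoord (n - 1) (n + 1) (v t) - (EuclideanSpace.single (⟨n - 1, by omega⟩ : Fin (n + 1)) (1:ℝ))))) t :=
      ((hdg t ht).smul (hdW1 t ht)).add ((hdg1 t ht).smul ((hdW t ht).sub_const _))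
    exact (hα2 t ht).unique (hF.congr_of_eventuallyEq
      (Filter.eventuallyEq_of_mem (hIopen.mem_nhds ht) fun u hu => heq1 u hu))
  have hvG : ∀ u ∈ I, v'' u = (4 * ⟪v u, v' u⟫_ℝ / (⟪v u, v u⟫_ℝ + 1) - 2 * ρ' u / ρ u) • v' u - (2 * ⟪v' u, v' u⟫_ℝ / (⟪v u, v u⟫_ℝ + 1)) • v u := by
    intro u hu
    have h := hgeo1 u hu
    rw [hni u, hni' u] at h
    have h4 : v'' u + ((2 * ⟪v' u, v' u⟫_ℝ / (⟪v u, v u⟫_ℝ + 1)) • v u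
        - (4 * ⟪v u, v' u⟫_ℝ / (⟪v u, v u⟫_ℝ + 1)) • v' u + (2 * ρ' u / ρ u) • v' u) = 0 := by
      rw [← h]; abel
    rw [eq_neg_of_add_eq_zero_left h4]
    module
  have heq2s : ∀ t ∈ I, α'' t = (-(4 * Real.sin ψ) * ρ' t / (ρ t * (⟪v t, v t⟫_ℝ + 1))) • embCoord (n - 1) (n + 1) (v' t) + (8 * Real.sin ψ * ρ' t * ⟪v t, v' t⟫_ℝ / (ρ t * (⟪v t, v t⟫_ℝ + 1) ^ 2) - 8 * Real.sin ψ * ⟪v' t, v' t⟫_ℝ / (⟪v t, v t⟫_ℝ + 1) ^ 3) • (embCoord (n - 1) (n + 1) (v t) - (EuclideanSpace.single (⟨n - 1, by omega⟩ : Fin (n + 1)) (1:ℝ))) - (4 * Real.sin ψ * ⟪v' t, v' t⟫_ℝ / (⟪v t, v t⟫_ℝ + 1) ^ 2) • (EuclideanSpace.single (⟨n - 1, by omega⟩ : Fin (n + 1)) (1:ℝ)) := by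
    intro t ht
    have hρn : ρ t ≠ 0 := (hρpos t ht).ne'
    rw [heq2 t ht, hvG t ht]
    simp only [← embCoordL_apply, map_sub, map_add, map_smul]
    simp only [embCoordL_apply]
    simp only [inner_add_left, inner_add_right, inner_sub_left, inner_sub_right,
      real_inner_smul_left, real_inner_smul_right]
    simp only [real_inner_comm (v' t) (v t)]
    have hq := hQne t
    set a00 := ⟪v t, v t⟫_ℝ
    set a01 := ⟪v t, v' t⟫_ℝ
    set a11 := ⟪v' t, v' t⟫_ℝ
    match_scalars <;> (field_simp [hq, hρn]; try ring)
  intro t ht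
  have hρn : ρ t ≠ 0 := (hρpos t ht).ne'
  have hdB2 := ((((hasDerivAt_const t (-(4 * Real.sin ψ))).fun_mul (hρ2 t ht)).fun_div
      ((hρ1 t ht).fun_mul (hdQ t ht)) (mul_ne_zero hρn (hQne t))).smul (hdW1 t ht)).add
    (((((hasDerivAt_const t (8 * Real.sin ψ)).fun_mul (hρ2 t ht)).fun_mul (hdP t ht)).fun_div
      ((hρ1 t ht).fun_mul ((hdQ t ht).fun_pow 2)) (mul_ne_zero hρn (pow_ne_zero 2 (hQne t))) |>.fun_sub
      (((hasDerivAt_const t (8 * Real.sin ψ)).fun_mul (hdN t ht)).fun_div ((hdQ t ht).fun_pow 3)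
        (pow_ne_zero 3 (hQne t)))).smul ((hdW t ht).sub_const (EuclideanSpace.single (⟨n - 1, by omega⟩ : Fin (n + 1)) (1:ℝ)))) |>.sub
    ((((hasDerivAt_const t (4 * Real.sin ψ)).fun_mul (hdN t ht)).fun_div ((hdQ t ht).fun_pow 2)
      (pow_ne_zero 2 (hQne t))).smul_const (EuclideanSpace.single (⟨n - 1, by omega⟩ : Fin (n + 1)) (1:ℝ)))
  have heq3 := (hα3 t ht).unique (hdB2.congr_of_eventuallyEq
    (Filter.eventuallyEq_of_mem (hIopen.mem_nhds ht) fun u hu => heq2s u hu))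
  have rel : (4 * ‖v' t‖ ^ 2 * (1 + 2 * Real.sin ψ ^ 2) / (‖v t‖ ^ 2 + 1) ^ 2
      + 6 * (ρ' t) ^ 2 / (ρ t) ^ 2) • α' t
      + (6 * ρ' t / ρ t) • α'' t + α''' t = 0 := by
    rw [heq1 t ht, heq2s t ht, heq3, hvG t ht, hgeo2 t ht, hni t, hni' t]
    simp only [← embCoordL_apply, map_sub, map_add, map_smul]
    simp only [embCoordL_apply]
    simp only [inner_add_left, inner_add_right, inner_sub_left, inner_sub_right,
      real_inner_smul_left, real_inner_smul_right]
    simp only [real_inner_comm (v' t) (v t)]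
    have hq := hQne t
    set a00 := ⟪v t, v t⟫_ℝ
    set a01 := ⟪v t, v' t⟫_ℝ
    set a11 := ⟪v' t, v' t⟫_ℝ
    match_scalars <;> (field_simp [hq, hρn]; try ring)
  refine ⟨rel, fun hli => ?_⟩
  have h0 := Fintype.linearIndependent_iff.mp hli
    ![4 * ‖v' t‖ ^ 2 * (1 + 2 * Real.sin ψ ^ 2) / (‖v t‖ ^ 2 + 1) ^ 2
        + 6 * (ρ' t) ^ 2 / (ρ t) ^ 2, 6 * ρ' t / ρ t, 1]
    (by simpa [Fin.sum_univ_three] using rel) 2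
  simp at h0
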